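/- Let G be symmetric positive semidefinite, λ_FSD ≥ 0, λ_WSD > 0, and g ∈ R^m. Define q(P) = -g^T P g + (λ_FSD/2) g^T P^T G P g + (λ_WSD/2) g^T P^T P g over m×m matrices P. Then q is a convex function of P, and P* = (λ_FSD·G + λ_WSD·I)^{-1} is a global minimizer of E[q(P)] whenever g is random with arbitrary distribution (with finite second moments). -/

import Mathlib

open Matrix MeasureTheory
open scoped Matrix

private lemma apo_dot_symm {m : ℕ} {A : Matrix (Fin m) (Fin m) ℝ} (hA : Aᵀ = A)
    (x y : Fin m → ℝ) : x ⬝ᵥ A.mulVec y = y ⬝ᵥ A.mulVec x := by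
  rw [Matrix.dotProduct_mulVec, ← hA, Matrix.vecMul_transpose, dotProduct_comm, hA]

private lemma apo_quad_expand {m : ℕ} (M : Matrix (Fin m) (Fin m) ℝ) (v : Fin m → ℝ) :
    v ⬝ᵥ M.mulVec v = ∑ i, ∑ j, M i j * (v i * v j) := by
  simp only [dotProduct, mulVec, Finset.mul_sum]
  exact Finset.sum_congr rfl fun i _ => Finset.sum_congr rfl fun j _ => by ring

private lemma apo_sandwich {m : ℕ} (P G : Matrix (Fin m) (Fin m) ℝ) (v : Fin m → ℝ) :
    v ⬝ᵥ (Pᵀ * G * P).mulVec v = (P.mulVec v) ⬝ᵥ G.mulVec (P.mulVec v) := by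
  rw [← Matrix.mulVec_mulVec, ← Matrix.mulVec_mulVec, Matrix.dotProduct_mulVec,
    Matrix.vecMul_transpose]

/-- The key scalar convexity inequality for `v ↦ -(c ⬝ᵥ v) + ½ v ⬝ᵥ A v`. -/
private lemma apo_key {m : ℕ} {A : Matrix (Fin m) (Fin m) ℝ} (hA : A.PosSemidef)
    (hAt : Aᵀ = A) (c x y : Fin m → ℝ) (a b : ℝ) (ha : 0 ≤ a) (hb : 0 ≤ b)
    (hab : a + b = 1) :
    -(c ⬝ᵥ (a • x + b • y)) + (1/2) * ((a • x + b • y) ⬝ᵥ A.mulVec (a • x + b • y))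
      ≤ a * (-(c ⬝ᵥ x) + (1/2) * (x ⬝ᵥ A.mulVec x))
        + b * (-(c ⬝ᵥ y) + (1/2) * (y ⬝ᵥ A.mulVec y)) := by
  have hu : y ⬝ᵥ A.mulVec x = x ⬝ᵥ A.mulVec y := apo_dot_symm hAt y x
  have nn : 0 ≤ (x - y) ⬝ᵥ A.mulVec (x - y) := by
    have := hA.dotProduct_mulVec_nonneg (x - y)
    simpa using this
  have hnn2 : 0 ≤ x ⬝ᵥ A.mulVec x - 2 * (x ⬝ᵥ A.mulVec y) + y ⬝ᵥ A.mulVec y := by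
    have e : (x - y) ⬝ᵥ A.mulVec (x - y)
        = x ⬝ᵥ A.mulVec x - 2 * (x ⬝ᵥ A.mulVec y) + y ⬝ᵥ A.mulVec y := by
      rw [Matrix.mulVec_sub, sub_dotProduct, dotProduct_sub,
        dotProduct_sub, hu]
      ring
    linarith [nn, e ▸ nn]
  have elin : c ⬝ᵥ (a • x + b • y) = a * (c ⬝ᵥ x) + b * (c ⬝ᵥ y) := by
    rw [dotProduct_add, dotProduct_smul, dotProduct_smul,
      smul_eq_mul, smul_eq_mul]
  have equad : (a • x + b • y) ⬝ᵥ A.mulVec (a • x + b • y)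
      = a * a * (x ⬝ᵥ A.mulVec x) + 2 * (a * b) * (x ⬝ᵥ A.mulVec y)
        + b * b * (y ⬝ᵥ A.mulVec y) := by
    rw [Matrix.mulVec_add, Matrix.mulVec_smul, Matrix.mulVec_smul,
      add_dotProduct, smul_dotProduct, smul_dotProduct,
      dotProduct_add, dotProduct_add, dotProduct_smul,
      dotProduct_smul, dotProduct_smul, dotProduct_smul, hu]
    simp only [smul_eq_mul]
    ring
  have hb1 : b = 1 - a := by linarith
  subst hb1
  rw [elin, equad]
  nlinarith [mul_nonneg (mul_nonneg ha hb) hnn2, hnn2, ha, hb]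

private lemma apo_A_dot {m : ℕ} (G : Matrix (Fin m) (Fin m) ℝ) (lamF lamW : ℝ)
    (v w : Fin m → ℝ) :
    v ⬝ᵥ (lamF • G + lamW • (1 : Matrix (Fin m) (Fin m) ℝ)).mulVec w
      = lamF * (v ⬝ᵥ G.mulVec w) + lamW * (v ⬝ᵥ w) := by
  rw [Matrix.add_mulVec, Matrix.smul_mulVec, Matrix.smul_mulVec,
    dotProduct_add, dotProduct_smul, dotProduct_smul,
    Matrix.one_mulVec, smul_eq_mul, smul_eq_mul]

/-- Convexity of the approximate APO meta-objective in the preconditioner, and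
global optimality of `P* = (λ_FSD G + λ_WSD I)⁻¹` for its expectation. -/
theorem apo_meta_objective_convex_and_global_min
    (m : ℕ) (G : Matrix (Fin m) (Fin m) ℝ) (hG : G.PosSemidef)
    (lamF lamW : ℝ) (hlamF : 0 ≤ lamF) (hlamW : 0 < lamW)
    (q : (Fin m → ℝ) → Matrix (Fin m) (Fin m) ℝ → ℝ)
    (hq : ∀ (g : Fin m → ℝ) (P : Matrix (Fin m) (Fin m) ℝ),
      q g P = -(g ⬝ᵥ P.mulVec g) + (lamF / 2) * (g ⬝ᵥ (Pᵀ * G * P).mulVec g)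
        + (lamW / 2) * (g ⬝ᵥ (Pᵀ * P).mulVec g))
    {Ω : Type*} [MeasurableSpace Ω] (μ : Measure Ω) [IsProbabilityMeasure μ]
    (g : Ω → Fin m → ℝ)
    (hInt : ∀ i j, Integrable (fun ω => g ω i * g ω j) μ) :
    (∀ gv : Fin m → ℝ, ConvexOn ℝ Set.univ (q gv)) ∧
      ∀ P : Matrix (Fin m) (Fin m) ℝ,
        (∫ ω, q (g ω) ((lamF • G + lamW • (1 : Matrix (Fin m) (Fin m) ℝ))⁻¹) ∂μ)
          ≤ ∫ ω, q (g ω) P ∂μ := by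
  set A : Matrix (Fin m) (Fin m) ℝ := lamF • G + lamW • (1 : Matrix (Fin m) (Fin m) ℝ)
    with hAdef
  have hAt : Aᵀ = A := by
    have hGt : Gᵀ = G := hG.isHermitian
    simp [hAdef, Matrix.transpose_add, Matrix.transpose_smul, hGt]
  have hApd : A.PosDef := by
    refine Matrix.PosDef.of_dotProduct_mulVec_pos ?_ (fun x hx => ?_)
    · simpa [Matrix.IsHermitian] using hAt
    · have h1 : (star x ⬝ᵥ A.mulVec x)
          = lamF * (star x ⬝ᵥ G.mulVec x) + lamW * (star x ⬝ᵥ x) := by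
        simp [hAdef, Matrix.add_mulVec, Matrix.smul_mulVec,
          dotProduct_add, dotProduct_smul, Matrix.one_mulVec,
          smul_eq_mul]
      rw [h1]
      have h2 : 0 ≤ star x ⬝ᵥ G.mulVec x := hG.dotProduct_mulVec_nonneg x
      have h3 : 0 < star x ⬝ᵥ x := by
        simpa using dotProduct_star_self_pos_iff.mpr hx
      have := mul_nonneg hlamF h2
      nlinarith
  -- the quadratic form shape of q
  have hqform : ∀ (gv : Fin m → ℝ) (P : Matrix (Fin m) (Fin m) ℝ),
      q gv P = -(gv ⬝ᵥ P.mulVec gv)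
        + (1/2) * ((P.mulVec gv) ⬝ᵥ A.mulVec (P.mulVec gv)) := by
    intro gv P
    have e1 : gv ⬝ᵥ (Pᵀ * G * P).mulVec gv
        = (P.mulVec gv) ⬝ᵥ G.mulVec (P.mulVec gv) := apo_sandwich P G gv
    have e2 : gv ⬝ᵥ (Pᵀ * P).mulVec gv = (P.mulVec gv) ⬝ᵥ (P.mulVec gv) := by
      rw [← Matrix.mulVec_mulVec, Matrix.dotProduct_mulVec, Matrix.vecMul_transpose]
    have e3 : (P.mulVec gv) ⬝ᵥ A.mulVec (P.mulVec gv)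
        = lamF * ((P.mulVec gv) ⬝ᵥ G.mulVec (P.mulVec gv))
          + lamW * ((P.mulVec gv) ⬝ᵥ (P.mulVec gv)) :=
      apo_A_dot G lamF lamW _ _
    rw [hq, e1, e2, e3]
    ring
  constructor
  · -- convexity
    intro gv
    refine ⟨convex_univ, fun P _ Q _ a b ha hb hab => ?_⟩
    simp only [smul_eq_mul]
    rw [hqform, hqform, hqform]
    have hmv : (a • P + b • Q).mulVec gv = a • P.mulVec gv + b • Q.mulVec gv := by
      rw [Matrix.add_mulVec, Matrix.smul_mulVec, Matrix.smul_mulVec]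
    rw [hmv]
    exact apo_key hApd.posSemidef hAt gv (P.mulVec gv) (Q.mulVec gv) a b ha hb hab
  · -- global optimality of A⁻¹ in expectation
    intro P
    -- integrability of quadratic-form evaluations
    have hIntM : ∀ M : Matrix (Fin m) (Fin m) ℝ,
        Integrable (fun ω => (g ω) ⬝ᵥ M.mulVec (g ω)) μ := by
      intro M
      have e : (fun ω => (g ω) ⬝ᵥ M.mulVec (g ω))
          = fun ω => ∑ i, ∑ j, M i j * (g ω i * g ω j) :=
        funext fun ω => apo_quad_expand M (g ω)
      rw [e]
      refine integrable_finset_sum _ fun i _ => integrable_finset_sum _ fun j _ => ?_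
      exact (hInt i j).const_mul _
    have hIntQ : ∀ R : Matrix (Fin m) (Fin m) ℝ,
        Integrable (fun ω => q (g ω) R) μ := by
      intro R
      have e : (fun ω => q (g ω) R)
          = fun ω => -((g ω) ⬝ᵥ R.mulVec (g ω))
            + (lamF / 2) * ((g ω) ⬝ᵥ (Rᵀ * G * R).mulVec (g ω))
            + (lamW / 2) * ((g ω) ⬝ᵥ (Rᵀ * R).mulVec (g ω)) :=
        funext fun ω => hq (g ω) R
      rw [e]
      exact (((hIntM R).neg.add ((hIntM _).const_mul _)).add ((hIntM _).const_mul _))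
    -- pointwise optimality
    have hpt : ∀ gv : Fin m → ℝ, q gv A⁻¹ ≤ q gv P := by
      intro gv
      have hdet : IsUnit A.det := isUnit_iff_ne_zero.mpr (ne_of_gt hApd.det_pos)
      have hAinv : A * A⁻¹ = 1 := Matrix.mul_nonsing_inv A hdet
      set w : Fin m → ℝ := P.mulVec gv
      set ws : Fin m → ℝ := A⁻¹.mulVec gv with hws
      have hAw : A.mulVec ws = gv := by
        rw [hws, Matrix.mulVec_mulVec, hAinv, Matrix.one_mulVec]
      have hu : gv ⬝ᵥ w = ws ⬝ᵥ A.mulVec w := by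
        rw [← hAw, dotProduct_comm]
        exact apo_dot_symm hAt w ws
      have ht : gv ⬝ᵥ ws = ws ⬝ᵥ A.mulVec ws := by
        rw [← hAw, dotProduct_comm]
      have nn : 0 ≤ (w - ws) ⬝ᵥ A.mulVec (w - ws) := by
        have := hApd.posSemidef.dotProduct_mulVec_nonneg (w - ws)
        simpa using this
      have hsym : ws ⬝ᵥ A.mulVec w = w ⬝ᵥ A.mulVec ws := apo_dot_symm hAt ws w
      have e : (w - ws) ⬝ᵥ A.mulVec (w - ws)
          = w ⬝ᵥ A.mulVec w - 2 * (ws ⬝ᵥ A.mulVec w) + ws ⬝ᵥ A.mulVec ws := by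
        rw [Matrix.mulVec_sub, sub_dotProduct, dotProduct_sub,
          dotProduct_sub, hsym]
        ring
      rw [hqform gv P, hqform gv A⁻¹]
      have hwv : A⁻¹.mulVec gv = ws := rfl
      rw [hwv, hu, ht]
      nlinarith [e ▸ nn]
    exact integral_mono (hIntQ A⁻¹) (hIntQ P) fun ω => hpt (g ω)
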